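/- Let d ≥ 2, let f : ℝ^d → [0, ∞) be continuous with compact support, let a₁, a₂ ∈ ℝ^d with a₁ ≤ a₂ componentwise, and let c > 0 be such that f(b) ≥ c for every b in the hyperrectangle [a₁, a₂] = {b ∈ ℝ^d : a₁ ≤ b ≤ a₂ componentwise}. Then there exists δ > 0 such that, with c' = (c/2)(2δ)^{d−1} d^{(1−d)/2} > 0, for every h ∈ (0, 1], every t ∈ ℝ^d whose i-th coordinate satisfies (a₁)_i + h ≤ t_i ≤ (a₂)_i − h for all i, every θ ∈ S^{d−1}, and every s ∈ ℝ with h|s| < δ/√d, one has Rf(⟨t, θ⟩ + hs, θ) ≥ c'. -/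

import Mathlib

open MeasureTheory
open scoped RealInnerProductSpace

/-- The Radon transform of `f : ℝ^d → ℝ`. -/
noncomputable def radon (d : ℕ) (f : EuclideanSpace ℝ (Fin d) → ℝ) (s : ℝ)
    (θ : EuclideanSpace ℝ (Fin d)) : ℝ :=
  ∫ w : ((ℝ ∙ θ)ᗮ : Submodule ℝ (EuclideanSpace ℝ (Fin d))), f (s • θ + w)

set_option maxHeartbeats 1600000

/-- If a continuous compactly supported nonnegative `f` is bounded below by `c > 0` on the
hyperrectangle `[a₁, a₂]`, then there is `δ > 0` such that the Radon transform
`Rf(⟨t, θ⟩ + hs, θ)` is bounded below by `(c/2)(2δ)^{d−1} d^{(1−d)/2}` for all scales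
`h ∈ (0,1]`, all `t` with `a₁ + h ≤ t ≤ a₂ − h` componentwise, all unit `θ` and all `s`
with `h|s| < δ/√d`. -/
theorem radon_lower_bound_on_rectangle
    (d : ℕ) (hd : 2 ≤ d) (f : EuclideanSpace ℝ (Fin d) → ℝ)
    (hf_cont : Continuous f) (hf_supp : HasCompactSupport f) (hf_nonneg : ∀ b, 0 ≤ f b)
    (a₁ a₂ : EuclideanSpace ℝ (Fin d)) (hle : ∀ i, a₁ i ≤ a₂ i)
    (c : ℝ) (hc : 0 < c)
    (hfc : ∀ b : EuclideanSpace ℝ (Fin d), (∀ i, a₁ i ≤ b i ∧ b i ≤ a₂ i) → c ≤ f b) :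
    ∃ δ : ℝ, 0 < δ ∧
      ∀ h : ℝ, 0 < h → h ≤ 1 →
      ∀ t : EuclideanSpace ℝ (Fin d), (∀ i, a₁ i + h ≤ t i ∧ t i ≤ a₂ i - h) →
      ∀ θ : EuclideanSpace ℝ (Fin d), ‖θ‖ = 1 →
      ∀ s : ℝ, h * |s| < δ / Real.sqrt d →
      c / 2 * (2 * δ) ^ (d - 1) * (d : ℝ) ^ ((1 - (d : ℝ)) / 2)
        ≤ radon d f (⟪t, θ⟫ + h * s) θ := by
  classical
  set K : Set (EuclideanSpace ℝ (Fin d)) := {b | ∀ i, a₁ i ≤ b i ∧ b i ≤ a₂ i} with hK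
  -- K is compact
  have hKeq : K = (EuclideanSpace.equiv (Fin d) ℝ).toHomeomorph ⁻¹'
      (Set.Icc (fun i => a₁ i) (fun i => a₂ i)) := by
    ext x
    simp [K, Set.mem_Icc, Pi.le_def, forall_and]
  have hKcompact : IsCompact K := by
    rw [hKeq]
    exact (EuclideanSpace.equiv (Fin d) ℝ).toHomeomorph.isCompact_preimage.mpr isCompact_Icc
  have hKU : K ⊆ f ⁻¹' Set.Ioi (c / 2) := by
    intro x hx
    have := hfc x hx
    simp only [Set.mem_preimage, Set.mem_Ioi]
    linarith
  obtain ⟨δ, hδ, hsub⟩ := hKcompact.exists_cthickening_subset_open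
    (isOpen_Ioi.preimage hf_cont) hKU
  have key : ∀ x t₀, t₀ ∈ K → dist x t₀ ≤ δ → c / 2 ≤ f x := by
    intro x t₀ ht₀ hdist
    have : x ∈ Metric.cthickening δ K :=
      Metric.mem_cthickening_of_dist_le x t₀ δ K ht₀ hdist
    exact (hsub this).le
  refine ⟨δ, hδ, ?_⟩
  intro h hh0 hh1 t ht θ hθ s hs
  have hd0 : (0 : ℝ) < d := by positivity
  have hsd : (0 : ℝ) < Real.sqrt d := Real.sqrt_pos.mpr hd0
  set r : ℝ := δ / Real.sqrt d with hrdef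
  have hr : 0 < r := div_pos hδ hsd
  have hθ0 : θ ≠ 0 := by
    intro h0
    rw [h0, norm_zero] at hθ
    norm_num at hθ
  set E : Submodule ℝ (EuclideanSpace ℝ (Fin d)) := (ℝ ∙ θ)ᗮ with hE
  have hrank : Module.finrank ℝ E = d - 1 := by
    have h1 : Module.finrank ℝ (ℝ ∙ θ) = 1 := finrank_span_singleton hθ0
    have h2 : Module.finrank ℝ (ℝ ∙ θ) + Module.finrank ℝ E =
        Module.finrank ℝ (EuclideanSpace ℝ (Fin d)) :=
      Submodule.finrank_add_finrank_orthogonal (K := (ℝ ∙ θ))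
    rw [h1, finrank_euclideanSpace_fin] at h2
    omega
  have hmd : ((d - 1 : ℕ) : ℝ) = (d : ℝ) - 1 := by
    rw [Nat.cast_sub (by omega)]; norm_num
  set b : OrthonormalBasis (Fin (d - 1)) ℝ E :=
    (stdOrthonormalBasis ℝ E).reindex (finCongr hrank) with hb
  -- the orthogonal part of t
  have htperp : t - ⟪t, θ⟫ • θ ∈ E := by
    rw [hE, Submodule.mem_orthogonal_singleton_iff_inner_right]
    rw [inner_sub_right, real_inner_smul_right, real_inner_self_eq_norm_sq, hθ]
    rw [real_inner_comm]
    ring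
  set p : E := ⟨t - ⟪t, θ⟫ • θ, htperp⟩ with hp
  set s' : ℝ := ⟪t, θ⟫ + h * s with hs'
  set g : E → ℝ := fun w => f (s' • θ + w) with hg
  -- integrability
  have hφiso : Isometry (fun w : E => s' • θ + (w : EuclideanSpace ℝ (Fin d))) := by
    apply Isometry.of_dist_eq
    intro w₁ w₂
    rw [dist_add_left]
    rfl
  have hgsupp : HasCompactSupport g :=
    hf_supp.comp_isClosedEmbedding hφiso.isClosedEmbedding
  have hgcont : Continuous g :=
    hf_cont.comp (continuous_const.add continuous_subtype_val)
  have hgint : Integrable g := hgcont.integrable_of_hasCompactSupport hgsupp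
  -- the cube
  set Q : Set (EuclideanSpace ℝ (Fin (d - 1))) :=
    WithLp.ofLp ⁻¹' Set.univ.pi (fun j => Set.Icc (b.repr p j - r) (b.repr p j + r)) with hQ
  have hQmeas : MeasurableSet Q :=
    (MeasurableSet.univ_pi (fun j => measurableSet_Icc)).preimage
      (MeasurableEquiv.toLp 2 (Fin (d - 1) → ℝ)).symm.measurable
  set C : Set E := ⇑b.repr ⁻¹' Q with hC
  have hCmeas : MeasurableSet C :=
    hQmeas.preimage b.repr.continuous.measurable
  have hQvol : volume Q = (ENNReal.ofReal (2 * r)) ^ (d - 1) := by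
    have := (EuclideanSpace.volume_preserving_symm_measurableEquiv_toLp (Fin (d - 1))).measure_preimage
      (s := Set.univ.pi (fun j : Fin (d - 1) => Set.Icc (b.repr p j - r) (b.repr p j + r)))
      (MeasurableSet.univ_pi (fun j => measurableSet_Icc)).nullMeasurableSet
    have heq : Q = (MeasurableEquiv.toLp 2 (Fin (d - 1) → ℝ)).symm ⁻¹'
        (Set.univ.pi (fun j : Fin (d - 1) => Set.Icc (b.repr p j - r) (b.repr p j + r))) := rfl
    rw [heq, this, volume_pi_pi]
    have h2r : ∀ x : ℝ, x + r - (x - r) = 2 * r := fun x => by ring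
    simp only [Real.volume_Icc, h2r]
    rw [Finset.prod_const, Finset.card_univ, Fintype.card_fin]
  have hCvol : volume C = (ENNReal.ofReal (2 * r)) ^ (d - 1) := by
    rw [hC, b.measurePreserving_repr.measure_preimage hQmeas.nullMeasurableSet, hQvol]
  have hCvol_ne_top : volume C ≠ ⊤ := by
    rw [hCvol]
    exact ENNReal.pow_ne_top ENNReal.ofReal_ne_top
  have hCvol_toReal : (volume C).toReal = (2 * r) ^ (d - 1) := by
    rw [hCvol, ENNReal.toReal_pow, ENNReal.toReal_ofReal (by positivity)]
  -- pointwise bound on C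
  have hbound : ∀ w ∈ C, c / 2 ≤ g w := by
    intro w hw
    have hvE : (w : EuclideanSpace ℝ (Fin d)) - (p : EuclideanSpace ℝ (Fin d)) ∈ (ℝ ∙ θ)ᗮ :=
      Submodule.sub_mem E w.2 p.2
    have hinner : ⟪θ, (w : EuclideanSpace ℝ (Fin d)) - p⟫ = 0 :=
      (Submodule.mem_orthogonal_singleton_iff_inner_right).mp hvE
    -- the point equals t + ((h*s)•θ + (w - p))
    have hx : s' • θ + (w : EuclideanSpace ℝ (Fin d))
        = t + ((h * s) • θ + ((w : EuclideanSpace ℝ (Fin d)) - p)) := by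
      simp only [hp, hs', add_smul]
      module
    -- norm of w - p
    have hnorm_wp : ‖(w : EuclideanSpace ℝ (Fin d)) - p‖ ^ 2 ≤ ((d - 1 : ℕ) : ℝ) * r ^ 2 := by
      have h1 : ‖(w : EuclideanSpace ℝ (Fin d)) - p‖ = ‖b.repr (w - p)‖ := by
        rw [b.repr.norm_map]
        rfl
      rw [h1, EuclideanSpace.norm_eq, Real.sq_sqrt (by positivity)]
      have : ∀ j : Fin (d - 1), ‖b.repr (w - p) j‖ ^ 2 ≤ r ^ 2 := by
        intro j
        have hwj := hw j (Set.mem_univ j)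
        simp only [Set.mem_Icc] at hwj
        rw [map_sub]
        simp only [PiLp.sub_apply, Real.norm_eq_abs, sq_abs]
        have h2 : |b.repr w j - b.repr p j| ≤ r := by
          rw [abs_le]; constructor <;> linarith [hwj.1, hwj.2]
        nlinarith [abs_nonneg (b.repr w j - b.repr p j), abs_le.mp h2]
      calc ∑ j, ‖b.repr (w - p) j‖ ^ 2 ≤ ∑ _j : Fin (d - 1), r ^ 2 :=
            Finset.sum_le_sum (fun j _ => this j)
        _ = ((d - 1 : ℕ) : ℝ) * r ^ 2 := by rw [Finset.sum_const, Finset.card_univ, Fintype.card_fin,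
            nsmul_eq_mul]
    -- distance to t
    have hdist : dist (s' • θ + (w : EuclideanSpace ℝ (Fin d))) t ≤ δ := by
      rw [hx, dist_eq_norm]
      have hx2 : t + ((h * s) • θ + ((w : EuclideanSpace ℝ (Fin d)) - p)) - t
          = (h * s) • θ + ((w : EuclideanSpace ℝ (Fin d)) - p) := by abel
      rw [hx2]
      have hsq : ‖(h * s) • θ + ((w : EuclideanSpace ℝ (Fin d)) - p)‖ ^ 2
          = (h * s) ^ 2 + ‖(w : EuclideanSpace ℝ (Fin d)) - p‖ ^ 2 := by
        rw [norm_add_sq_real, real_inner_smul_left, hinner, norm_smul, hθ]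
        simp [sq_abs, mul_pow]
      have hhs2 : (h * s) ^ 2 ≤ r ^ 2 := by
        have : |h * s| = h * |s| := by rw [abs_mul, abs_of_pos hh0]
        nlinarith [abs_nonneg (h * s), hs.le, sq_abs (h * s)]
      have hδ2 : ‖(h * s) • θ + ((w : EuclideanSpace ℝ (Fin d)) - p)‖ ^ 2 ≤ δ ^ 2 := by
        have hr2 : ((d - 1 : ℕ) : ℝ) * r ^ 2 ≤ ((d : ℝ) - 1) * r ^ 2 := by
          rw [hmd]
        have hrd : (d : ℝ) * r ^ 2 = δ ^ 2 := by
          rw [hrdef, div_pow, Real.sq_sqrt hd0.le]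
          field_simp
        nlinarith
      nlinarith [norm_nonneg ((h * s) • θ + ((w : EuclideanSpace ℝ (Fin d)) - p)), hδ.le]
    have htK : t ∈ K := by
      intro i
      obtain ⟨h1, h2⟩ := ht i
      constructor <;> linarith
    exact key _ t htK hdist
  -- putting it together
  have hchain : c / 2 * (volume C).toReal ≤ radon d f s' θ := by
    calc c / 2 * (volume C).toReal ≤ ∫ w in C, g w :=
          by have := setIntegral_ge_of_const_le hCmeas hCvol_ne_top hbound hgint.integrableOn
             simp only [Measure.real, smul_eq_mul] at this; linarith
      _ ≤ ∫ w, g w := setIntegral_le_integral hgint (Filter.Eventually.of_forall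
          (fun w => hf_nonneg _))
      _ = radon d f s' θ := rfl
  have harith : c / 2 * (2 * δ) ^ (d - 1) * (d : ℝ) ^ ((1 - (d : ℝ)) / 2)
      = c / 2 * (2 * r) ^ (d - 1) := by
    have h1 : ((d : ℝ)) ^ ((1 - (d : ℝ)) / 2) = (Real.sqrt d ^ (d - 1))⁻¹ := by
      rw [show (1 - (d : ℝ)) / 2 = (1 / 2) * (-((d - 1 : ℕ) : ℝ)) by rw [hmd]; ring,
        Real.rpow_mul hd0.le, ← Real.sqrt_eq_rpow,
        Real.rpow_neg hsd.le, Real.rpow_natCast]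
    rw [h1, hrdef]
    have hsdne : Real.sqrt d ≠ 0 := ne_of_gt hsd
    field_simp
    rw [← mul_pow]; congr 1; field_simp
  rw [harith, ← hCvol_toReal]
  exact hchain
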